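/- Let K be a field. The K-algebra homomorphism φ : K[u, v] → K[x, y] between polynomial rings in two variables determined by φ(u) = x²·y and φ(v) = y³ + x²·y + x is a finite ring map, i.e. K[x, y] is a finitely generated module over K[u, v] via φ. -/

import Mathlib

open MvPolynomial

/-- The `K`-algebra map `K[u,v] → K[x,y]`, `u ↦ x²y`, `v ↦ y³ + x²y + x`, is a finite
ring map: `K[x,y]` is a finitely generated module over `K[u,v]`. -/
theorem finite_ringHom_aeval (K : Type*) [Field K] :
    RingHom.Finite
      ((MvPolynomial.aeval (R := K)
        ![(X 0 : MvPolynomial (Fin 2) K) ^ 2 * X 1,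
          (X 1 : MvPolynomial (Fin 2) K) ^ 3 + (X 0) ^ 2 * X 1 + X 0]).toRingHom) := by
  set f := ((MvPolynomial.aeval (R := K)
        ![(X 0 : MvPolynomial (Fin 2) K) ^ 2 * X 1,
          (X 1 : MvPolynomial (Fin 2) K) ^ 3 + (X 0) ^ 2 * X 1 + X 0]).toRingHom) with hf
  letI : Algebra (MvPolynomial (Fin 2) K) (MvPolynomial (Fin 2) K) := f.toAlgebra
  have halg : ∀ a, algebraMap (MvPolynomial (Fin 2) K) (MvPolynomial (Fin 2) K) a = f a :=
    fun _ => rfl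
  have hX0 : f (X 0) = (X 0 : MvPolynomial (Fin 2) K) ^ 2 * X 1 := by simp [hf]
  have hX1 : f (X 1) = (X 1 : MvPolynomial (Fin 2) K) ^ 3 + (X 0) ^ 2 * X 1 + X 0 := by
    simp [hf]
  have h0 : IsIntegral (MvPolynomial (Fin 2) K) (X 0 : MvPolynomial (Fin 2) K) := by
    refine ⟨Polynomial.X ^ 7 - Polynomial.C (X 1 - X 0) * Polynomial.X ^ 6
      + Polynomial.C ((X 0) ^ 3), ?_, ?_⟩
    · monicity!
    · simp only [Polynomial.aeval_def, Polynomial.eval₂_add, Polynomial.eval₂_sub,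
        Polynomial.eval₂_mul, Polynomial.eval₂_pow, Polynomial.eval₂_X, Polynomial.eval₂_C,
        halg, map_sub, map_pow, hX0, hX1]
      ring
  have h1 : IsIntegral (MvPolynomial (Fin 2) K) (X 1 : MvPolynomial (Fin 2) K) := by
    refine ⟨Polynomial.X ^ 7 - Polynomial.C (2 * (X 1 - X 0)) * Polynomial.X ^ 4
      + Polynomial.C ((X 1 - X 0) ^ 2) * Polynomial.X - Polynomial.C (X 0), ?_, ?_⟩
    · monicity!
    · simp only [Polynomial.aeval_def, Polynomial.eval₂_add, Polynomial.eval₂_sub,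
        Polynomial.eval₂_mul, Polynomial.eval₂_pow, Polynomial.eval₂_X, Polynomial.eval₂_C,
        halg, map_sub, map_mul, map_pow, map_ofNat, Polynomial.eval₂_ofNat, hX0, hX1]
      ring
  have hint : ∀ i : Fin 2, IsIntegral (MvPolynomial (Fin 2) K) (X i : MvPolynomial (Fin 2) K) := by
    intro i
    fin_cases i
    · exact h0
    · exact h1
  haveI : @IsScalarTower K (MvPolynomial (Fin 2) K) (MvPolynomial (Fin 2) K) _
      f.toAlgebra.toSMul _ :=
    IsScalarTower.of_algebraMap_eq fun k => by
      simp [halg, hf, MvPolynomial.algebraMap_eq]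
  have htop : Algebra.adjoin (MvPolynomial (Fin 2) K)
      (Set.range (X : Fin 2 → MvPolynomial (Fin 2) K)) = ⊤ := by
    rw [eq_top_iff]
    intro z _
    have hz : z ∈ Algebra.adjoin K (Set.range (X : Fin 2 → MvPolynomial (Fin 2) K)) := by
      rw [MvPolynomial.adjoin_range_X]; trivial
    have hle : Algebra.adjoin K (Set.range (X : Fin 2 → MvPolynomial (Fin 2) K)) ≤
        (Algebra.adjoin (MvPolynomial (Fin 2) K)
          (Set.range (X : Fin 2 → MvPolynomial (Fin 2) K))).restrictScalars K :=
      Algebra.adjoin_le Algebra.subset_adjoin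
    exact hle hz
  have hfg : @Module.Finite (MvPolynomial (Fin 2) K) (MvPolynomial (Fin 2) K) _ _
      f.toAlgebra.toModule := by
    have h1 := fg_adjoin_of_finite (Set.finite_range (X : Fin 2 → MvPolynomial (Fin 2) K))
      (fun x hx => by obtain ⟨i, rfl⟩ := hx; exact hint i)
    rw [htop] at h1
    exact @Module.Finite.of_fg_top _ _ _ _ f.toAlgebra.toModule h1
  exact hfg
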